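/- arXiv:0905.1364 — 3 statements merged into one kernel-verified Lean document; each statement's English description precedes it below -/
import Mathlib

section
/- Let G be a group and q a natural number. Define the descending q-central sequence by G^(1) = G and G^(i+1) = (G^(i))^q [G^(i), G] (the subgroup generated by q-th powers of elements of G^(i) and commutators [h,g] with h ∈ G^(i), g ∈ G). Then [G^(2), G] is contained in [G,G]^q · [[G,G],G]. -/
/-- The commutator convention of the paper: `[x,y] = x⁻¹y⁻¹xy`. -/
def pComm {G : Type*} [Group G] (x y : G) : G := x⁻¹ * y⁻¹ * x * y

/-- The subgroup generated by `q`-th powers of elements of `H`. -/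
def qPow {G : Type*} [Group G] (q : ℕ) (H : Subgroup G) : Subgroup G :=
  Subgroup.closure {x : G | ∃ h ∈ H, x = h ^ q}

/-- `H^q [H,G]`: the subgroup generated by `q`-th powers of elements of `H`
together with all commutators `[h,g]`, `h ∈ H`, `g ∈ G`. -/
def qVerbal {G : Type*} [Group G] (q : ℕ) (H : Subgroup G) : Subgroup G :=
  Subgroup.closure ({x : G | ∃ h ∈ H, x = h ^ q} ∪
    {x : G | ∃ h ∈ H, ∃ g : G, x = pComm h g})

/-- The descending q-central sequence; `qcs q G i` is `G^(i+1)` in the paper's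
(1-based) notation, i.e. `qcs q G 0 = G` and `qcs q G (i+1) = (G^(i+1))^q [G^(i+1), G]`. -/
def qcs (q : ℕ) (G : Type*) [Group G] : ℕ → Subgroup G
  | 0 => ⊤
  | i + 1 => qVerbal q (qcs q G i)

theorem qVerbal_normal {G : Type*} [Group G] (q : ℕ) {H : Subgroup G} (hH : H.Normal) :
    (qVerbal q H).Normal := by
  constructor
  intro n hn g
  set S : Set G := {x : G | ∃ h ∈ H, x = h ^ q} ∪ {x : G | ∃ h ∈ H, ∃ g : G, x = pComm h g} with hS
  have himg : (MulAut.conj g) '' S ⊆ (Subgroup.closure S : Set G) := by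
    rintro _ ⟨x, hx, rfl⟩
    rcases hx with ⟨h, hh, rfl⟩ | ⟨h, hh, g', rfl⟩
    · have : (MulAut.conj g) (h ^ q) = (g * h * g⁻¹) ^ q := by
        simp [MulAut.conj_apply, conj_pow]
      rw [this]
      exact Subgroup.subset_closure (Or.inl ⟨g * h * g⁻¹, hH.conj_mem h hh g, rfl⟩)
    · have : (MulAut.conj g) (pComm h g') = pComm (g * h * g⁻¹) (g * g' * g⁻¹) := by
        simp only [MulAut.conj_apply, pComm]
        group
      rw [this]
      exact Subgroup.subset_closure
        (Or.inr ⟨g * h * g⁻¹, hH.conj_mem h hh g, g * g' * g⁻¹, rfl⟩)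
  have h1 : (Subgroup.closure S).map (MulAut.conj g).toMonoidHom ≤ Subgroup.closure S := by
    rw [MonoidHom.map_closure]
    exact (Subgroup.closure_le _).2 himg
  exact h1 ⟨n, hn, by simp [MulAut.conj_apply]⟩

instance qcs_normal (q : ℕ) (G : Type*) [Group G] (i : ℕ) : (qcs q G i).Normal := by
  induction i with
  | zero => exact ⟨fun n _ g => Subgroup.mem_top _⟩
  | succ i ih => exact qVerbal_normal q ih

open scoped commutatorElement

private lemma comm_pow_aux {Q : Type*} [Group Q] (a b : Q)
    (h : ∀ x : Q, Commute x ⁅a, b⁆) : ∀ n : ℕ, ⁅a ^ n, b⁆ = ⁅a, b⁆ ^ n := by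
  intro n
  induction n with
  | zero => simp
  | succ n ih =>
    have key : ⁅a ^ (n + 1), b⁆ = a * ⁅a ^ n, b⁆ * a⁻¹ * ⁅a, b⁆ := by
      rw [pow_succ']
      simp only [commutatorElement_def]
      group
    rw [key, ih, pow_succ]
    have hc : Commute a (⁅a, b⁆ ^ n) := (h a).pow_right n
    rw [hc.eq]
    group

/-- For a group `G` and `q : ℕ`, with the descending q-central sequence
`G^(1) = G`, `G^(i+1) = (G^(i))^q [G^(i), G]` (here `qcs q G i = G^(i+1)`, so
`G^(2) = qcs q G 1`), the subgroup `[G^(2), G]` is contained in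
`[G,G]^q ⬝ [[G,G],G]`. -/
theorem commutator_qcs2_le {G : Type*} [Group G] (q : ℕ) :
    ⁅qcs q G 1, (⊤ : Subgroup G)⁆ ≤ qPow q (commutator G) ⊔ (⊤ : Subgroup G).lowerCentralSeries 2 := by
  set N : Subgroup G := qPow q (commutator G) ⊔ (⊤ : Subgroup G).lowerCentralSeries 2 with hNdef
  haveI hq : (qPow q (commutator G)).Normal := by
    constructor
    intro n hn g
    have himg : (MulAut.conj g) '' {x : G | ∃ h ∈ commutator G, x = h ^ q}
        ⊆ (qPow q (commutator G) : Set G) := by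
      rintro _ ⟨_, ⟨h, hh, rfl⟩, rfl⟩
      have : (MulAut.conj g) (h ^ q) = (g * h * g⁻¹) ^ q := by
        simp [MulAut.conj_apply, conj_pow]
      rw [this]
      exact Subgroup.subset_closure
        ⟨g * h * g⁻¹, (Subgroup.commutator_normal ⊤ ⊤).conj_mem h hh g, rfl⟩
    have h1 : (qPow q (commutator G)).map (MulAut.conj g).toMonoidHom
        ≤ qPow q (commutator G) := by
      rw [qPow, MonoidHom.map_closure]
      exact (Subgroup.closure_le _).2 himg
    exact h1 ⟨n, hn, by simp [MulAut.conj_apply]⟩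
  haveI hNn : N.Normal := Subgroup.sup_normal _ _
  let φ : G →* G ⧸ N := QuotientGroup.mk' N
  have hφ : Function.Surjective φ := QuotientGroup.mk'_surjective N
  -- commutators are central in the quotient
  have hγ3 : ∀ w : G, w ∈ (⊤ : Subgroup G).lowerCentralSeries 2 → φ w = 1 := by
    intro w hw
    exact (QuotientGroup.eq_one_iff w).mpr (le_sup_right (α := Subgroup G) hw)
  have hcent : ∀ x y : G, φ ⁅x, y⁆ ∈ Subgroup.center (G ⧸ N) := by
    intro x y
    rw [Subgroup.mem_center_iff]
    intro b
    obtain ⟨z, rfl⟩ := hφ b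
    have h1 : ⁅φ z, φ ⁅x, y⁆⁆ = 1 := by
      rw [← map_commutatorElement]
      apply hγ3
      have : ⁅⁅x, y⁆, z⁆ ∈ (⊤ : Subgroup G).lowerCentralSeries 2 :=
        Subgroup.commutator_mem_commutator
          (Subgroup.commutator_mem_commutator (Subgroup.mem_top x) (Subgroup.mem_top y))
          (Subgroup.mem_top z)
      rw [← commutatorElement_inv]
      exact inv_mem this
    exact commutatorElement_eq_one_iff_mul_comm.mp h1
  -- q-th powers are central in the quotient
  have hpow : ∀ x : G, φ x ^ q ∈ Subgroup.center (G ⧸ N) := by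
    intro x
    rw [Subgroup.mem_center_iff]
    intro b
    obtain ⟨y, rfl⟩ := hφ b
    have hc0 : ⁅φ x, φ y⁆ ∈ Subgroup.center (G ⧸ N) := by
      rw [← map_commutatorElement]; exact hcent x y
    have hcommute : ∀ c : G ⧸ N, Commute c ⁅φ x, φ y⁆ := fun c =>
      Subgroup.mem_center_iff.mp hc0 c
    have h1 : ⁅φ x ^ q, φ y⁆ = 1 := by
      rw [comm_pow_aux _ _ hcommute, ← map_commutatorElement, ← map_pow]
      refine (QuotientGroup.eq_one_iff _).mpr (le_sup_left (α := Subgroup G) ?_)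
      exact Subgroup.subset_closure
        ⟨⁅x, y⁆, Subgroup.commutator_mem_commutator (Subgroup.mem_top x) (Subgroup.mem_top y), rfl⟩
    exact (commutatorElement_eq_one_iff_mul_comm.mp h1).symm
  -- the image of qcs q G 1 is central
  have hqcs : qcs q G 1 ≤ (Subgroup.center (G ⧸ N)).comap φ := by
    show qVerbal q (⊤ : Subgroup G) ≤ _
    rw [qVerbal]
    apply (Subgroup.closure_le _).2
    rintro _ (⟨h, -, rfl⟩ | ⟨h, -, g, rfl⟩)
    · simpa [Subgroup.mem_comap, map_pow] using hpow h
    · have : pComm h g = ⁅h⁻¹, g⁻¹⁆ := by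
        simp [pComm, commutatorElement_def]
      simp only [Subgroup.mem_comap, this]
      exact hcent h⁻¹ g⁻¹
  rw [Subgroup.commutator_le]
  intro g₁ hg₁ g₂ _
  have hc := Subgroup.mem_center_iff.mp (hqcs hg₁) (φ g₂)
  have h1 : φ ⁅g₁, g₂⁆ = 1 := by
    rw [map_commutatorElement]
    exact commutatorElement_eq_one_iff_mul_comm.mpr hc.symm
  exact (QuotientGroup.eq_one_iff _).mp h1
end

section
/- Let G be a group with descending q-central sequence G^(1) = G, G^(i+1) = (G^(i))^q [G^(i), G]. Then [G,G] ∩ G^(3) = [[G,G],G] · ([G,G] ∩ G^(q²)) · [G,G]^q, where G^(q²) is the subgroup generated by q²-th powers. -/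
section AuxLemmas
variable {G : Type*} [Group G]
open scoped commutatorElement

lemma pComm_eq_commutator (a b : G) : pComm a b = ⁅a⁻¹, b⁻¹⁆ := by
  simp [pComm, commutatorElement_def]

lemma pComm_mem_commutator (a b : G) : pComm a b ∈ commutator G := by
  rw [pComm_eq_commutator, commutator_def]
  exact Subgroup.commutator_mem_commutator (Subgroup.mem_top _) (Subgroup.mem_top _)

lemma map_pComm {H : Type*} [Group H] (f : G →* H) (a b : G) :
    f (pComm a b) = pComm (f a) (f b) := by simp [pComm]

lemma mul_pow_div_mem_commutator (a b : G) (n : ℕ) :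
    ((a * b) ^ n)⁻¹ * (a ^ n * b ^ n) ∈ commutator G := by
  have key : ∀ A B : Abelianization G, A * B * (A⁻¹ * B⁻¹) = 1 := fun A B => by
    rw [mul_comm A B]; group
  have h : Abelianization.of (((a * b) ^ n)⁻¹ * (a ^ n * b ^ n)) = 1 := by
    simp only [map_mul, map_pow, map_inv, mul_pow, mul_inv_rev]
    group
  exact (QuotientGroup.eq_one_iff _).mp h

lemma qPow_normal (m : ℕ) {H : Subgroup G} (hH : H.Normal) : (qPow m H).Normal := by
  constructor
  intro n hn g
  have himg : (MulAut.conj g) '' {x : G | ∃ h ∈ H, x = h ^ m} ⊆ (qPow m H : Set G) := by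
    rintro _ ⟨x, ⟨h, hh, rfl⟩, rfl⟩
    have : (MulAut.conj g) (h ^ m) = (g * h * g⁻¹) ^ m := by
      simp [MulAut.conj_apply, conj_pow]
    rw [this]
    exact Subgroup.subset_closure ⟨_, hH.conj_mem h hh g, rfl⟩
  have h1 : (qPow m H).map (MulAut.conj g).toMonoidHom ≤ qPow m H := by
    rw [qPow, MonoidHom.map_closure]
    exact (Subgroup.closure_le _).2 himg
  exact h1 ⟨n, hn, by simp [MulAut.conj_apply]⟩

lemma pComm_hom_left {u y : G} (w : G) (hc : ∀ z : G, Commute (pComm u y) z) :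
    pComm (u * w) y = pComm u y * pComm w y := by
  calc pComm (u * w) y = w⁻¹ * pComm u y * (y⁻¹ * w * y) := by unfold pComm; group
    _ = pComm u y * w⁻¹ * (y⁻¹ * w * y) := by rw [← (hc w⁻¹).eq]
    _ = pComm u y * pComm w y := by unfold pComm; group

lemma pComm_pow_left {y : G} (u : G) (hc : ∀ z w : G, Commute (pComm z y) w) (n : ℕ) :
    pComm (u ^ n) y = pComm u y ^ n := by
  induction n with
  | zero => simp [pComm]
  | succ n ih => rw [pow_succ, pComm_hom_left _ (hc _), ih, pow_succ]

lemma pComm_eq_one_of_commute {x y : G} (h : Commute x y) : pComm x y = 1 := by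
  unfold pComm
  rw [(h.inv_inv).eq]
  group

lemma commutator_le_qVerbal_top (q : ℕ) : commutator G ≤ qVerbal q (⊤ : Subgroup G) := by
  rw [commutator_def]
  refine Subgroup.commutator_le.mpr fun a _ b _ => ?_
  have : ⁅a, b⁆ = pComm a⁻¹ b⁻¹ := by rw [pComm_eq_commutator]; simp
  rw [this]
  exact Subgroup.subset_closure (Or.inr ⟨a⁻¹, Subgroup.mem_top _, b⁻¹, rfl⟩)

end AuxLemmas

open scoped Pointwise
open scoped commutatorElement

/-- For a group `G` and a prime power `q = p^d` (`d ≥ 1`), with the descending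
q-central sequence `G^(1) = G`, `G^(i+1) = (G^(i))^q [G^(i), G]`
(here `qcs q G i = G^(i+1)`, so `G^(3) = qcs q G 2`), one has
`[G,G] ∩ G^(3) = [[G,G],G] ⬝ ([G,G] ∩ G^(q²)) ⬝ [G,G]^q`,
where `G^(q²)` is the subgroup generated by the `q²`-th powers. -/


theorem commutator_inf_qcs3 {G : Type*} [Group G] (p d q : ℕ) (hp : p.Prime)
    (hd : 1 ≤ d) (hq : q = p ^ d) :
    commutator G ⊓ qcs q G 2 =
      Subgroup.lowerCentralSeries (⊤ : Subgroup G) 2 ⊔ (commutator G ⊓ qPow (q ^ 2) ⊤) ⊔ qPow q (commutator G) := by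
  clear hp hd hq
  have hqcs2 : qcs q G 2 = qVerbal q (qVerbal q ⊤) := rfl
  have hqcs1 : qcs q G 1 = qVerbal q ⊤ := rfl
  -- basic inclusions
  have hlcs2_comm : Subgroup.lowerCentralSeries (⊤ : Subgroup G) 2 ≤ commutator G :=
    (Subgroup.lowerCentralSeries_antitone (S := ⊤) (by norm_num)).trans (le_of_eq Subgroup.top_lowerCentralSeries_one)
  have hqpow_comm : qPow q (commutator G) ≤ commutator G := by
    rw [qPow, Subgroup.closure_le]
    rintro x ⟨h, hh, rfl⟩
    exact pow_mem hh q
  have hcomm_qcs1 : commutator G ≤ qcs q G 1 := commutator_le_qVerbal_top q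
  have hlcs2_qcs2 : Subgroup.lowerCentralSeries (⊤ : Subgroup G) 2 ≤ qcs q G 2 := by
    have : Subgroup.lowerCentralSeries (⊤ : Subgroup G) 2 = ⁅commutator G, (⊤ : Subgroup G)⁆ := rfl
    rw [this, hqcs2]
    refine Subgroup.commutator_le.mpr fun a ha b _ => ?_
    have h1 : ⁅a, b⁆ = pComm a⁻¹ b⁻¹ := by rw [pComm_eq_commutator]; simp
    rw [h1]
    exact Subgroup.subset_closure
      (Or.inr ⟨a⁻¹, inv_mem (hcomm_qcs1 ha), b⁻¹, rfl⟩)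
  have hQ_qcs2 : qPow (q ^ 2) (⊤ : Subgroup G) ≤ qcs q G 2 := by
    rw [qPow, Subgroup.closure_le]
    rintro x ⟨h, -, rfl⟩
    have : h ^ q ^ 2 = (h ^ q) ^ q := by rw [← pow_mul, pow_two]
    rw [hqcs2, this]
    exact Subgroup.subset_closure
      (Or.inl ⟨h ^ q, Subgroup.subset_closure (Or.inl ⟨h, Subgroup.mem_top _, rfl⟩), rfl⟩)
  have hqpow_qcs2 : qPow q (commutator G) ≤ qcs q G 2 := by
    rw [qPow, Subgroup.closure_le]
    rintro x ⟨h, hh, rfl⟩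
    rw [hqcs2]
    exact Subgroup.subset_closure (Or.inl ⟨h, hcomm_qcs1 hh, rfl⟩)
  -- the normal subgroups
  haveI hNq : (qPow q (commutator G)).Normal := qPow_normal q inferInstance
  haveI hNQ : (qPow (q ^ 2) (⊤ : Subgroup G)).Normal := qPow_normal _ inferInstance
  set N : Subgroup G := Subgroup.lowerCentralSeries (⊤ : Subgroup G) 2 ⊔ qPow q (commutator G) with hN
  haveI : N.Normal := Subgroup.sup_normal _ _
  set M : Subgroup G := N ⊔ qPow (q ^ 2) (⊤ : Subgroup G) with hM
  haveI : M.Normal := Subgroup.sup_normal _ _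
  -- the quotient map
  set π : G →* G ⧸ M := QuotientGroup.mk' M with hπ
  have hker : ∀ x ∈ M, π x = 1 := fun x hx => (QuotientGroup.eq_one_iff x).mpr hx
  have hsurj : Function.Surjective π := QuotientGroup.mk'_surjective M
  have hcen : ∀ c ∈ commutator G, ∀ z : G ⧸ M, Commute (π c) z := by
    intro c hc z
    obtain ⟨g, rfl⟩ := hsurj z
    have h1 : ⁅c, g⁆ ∈ Subgroup.lowerCentralSeries (⊤ : Subgroup G) 2 :=
      Subgroup.commutator_mem_commutator (by exact hc) (Subgroup.mem_top g)
    have h2 : π ⁅c, g⁆ = 1 :=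
      hker _ ((le_sup_left.trans le_sup_left : Subgroup.lowerCentralSeries (⊤ : Subgroup G) 2 ≤ M) h1)
    rw [map_commutatorElement] at h2
    exact commutatorElement_eq_one_iff_commute.mp h2
  have hqone : ∀ c ∈ commutator G, (π c) ^ q = 1 := by
    intro c hc
    rw [← map_pow]
    exact hker _ ((le_sup_right.trans le_sup_left : qPow q (commutator G) ≤ M)
      (Subgroup.subset_closure ⟨c, hc, rfl⟩))
  have hq2 : ∀ a : G, (π a) ^ (q ^ 2) = 1 := by
    intro a
    rw [← map_pow]
    exact hker _ ((le_sup_right : qPow (q^2) ⊤ ≤ M) (Subgroup.subset_closure ⟨a, Subgroup.mem_top _, rfl⟩))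
  -- representation of elements of G^(2) in the quotient
  have rep : ∀ h ∈ qVerbal q (⊤ : Subgroup G),
      ∃ a c : G, c ∈ commutator G ∧ π h = π a ^ q * π c := by
    intro h hh
    rw [qVerbal] at hh
    refine Subgroup.closure_induction ?_ ?_ ?_ ?_ hh
    · rintro x (⟨a, -, rfl⟩ | ⟨a, -, g, rfl⟩)
      · exact ⟨a, 1, one_mem _, by simp⟩
      · exact ⟨1, pComm a g, pComm_mem_commutator a g, by simp⟩
    · exact ⟨1, 1, one_mem _, by simp⟩
    · rintro x y hx hy ⟨a, c, hc, hxe⟩ ⟨b, e, he, hye⟩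
      refine ⟨a * b, ((a * b) ^ q)⁻¹ * (a ^ q * b ^ q) * (c * e),
        mul_mem (mul_pow_div_mem_commutator a b q) (mul_mem hc he), ?_⟩
      have h1 : π x * π y = (π a ^ q * π b ^ q) * (π c * π e) := by
        rw [hxe, hye, mul_assoc, ← mul_assoc (π c), (hcen c hc _).eq,
          mul_assoc, ← mul_assoc, ← mul_assoc]
      have h2 : π a ^ q * π b ^ q
          = π (a * b) ^ q * π (((a * b) ^ q)⁻¹ * (a ^ q * b ^ q)) := by
        rw [← map_pow, ← map_pow, ← map_mul, ← map_pow, ← map_mul]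
        congr 1
        group
      rw [map_mul, h1, h2, mul_assoc]
      simp [map_mul, map_inv, map_pow, mul_assoc]
    · rintro x hx ⟨a, c, hc, hxe⟩
      refine ⟨a⁻¹, c⁻¹, inv_mem hc, ?_⟩
      rw [map_inv, hxe, mul_inv_rev, ← map_inv, ← inv_pow, ← map_inv]
      exact (hcen c⁻¹ (inv_mem hc) _).eq
  -- key inclusion: G^(3) ≤ M
  have hkey : qcs q G 2 ≤ M := by
    rw [hqcs2, qVerbal, Subgroup.closure_le]
    rintro x (⟨h, hh, rfl⟩ | ⟨h, hh, g, rfl⟩)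
    · obtain ⟨a, c, hc, hπe⟩ := rep h hh
      refine (QuotientGroup.eq_one_iff _).mp ?_
      show π (h ^ q) = 1
      have h1 : π (h ^ q) = (π a ^ q) ^ q * (π c) ^ q := by
        rw [map_pow, hπe, ((hcen c hc (π a ^ q)).symm).mul_pow]
      rw [h1, ← pow_mul, ← sq, hq2 a, hqone c hc, one_mul]
    · obtain ⟨a, c, hc, hπe⟩ := rep h hh
      refine (QuotientGroup.eq_one_iff _).mp ?_
      show π (pComm h g) = 1
      have hpc : ∀ z w : G ⧸ M, Commute (pComm z (π g)) w := by
        intro z w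
        obtain ⟨z₀, rfl⟩ := hsurj z
        rw [← map_pComm]
        exact hcen _ (pComm_mem_commutator z₀ g) w
      rw [map_pComm π h g, hπe,
        pComm_hom_left (π c) (fun z => hpc _ z),
        pComm_eq_one_of_commute (hcen c hc (π g)), mul_one,
        pComm_pow_left (π a) hpc q, ← map_pComm]
      rw [hqone _ (pComm_mem_commutator a g)]
  -- conclude
  refine le_antisymm ?_ ?_
  · rintro x ⟨hx1, hx2⟩
    have hxM : x ∈ M := hkey hx2
    have hx' : x ∈ (N : Set G) * (qPow (q ^ 2) (⊤ : Subgroup G) : Set G) := by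
      rw [← Subgroup.normal_mul]; exact hxM
    obtain ⟨n, hn, s, hs, rfl⟩ := hx'
    have hnc : n ∈ commutator G :=
      (sup_le hlcs2_comm hqpow_comm : N ≤ commutator G) hn
    have hsc : s ∈ commutator G := by
      have := mul_mem (inv_mem hnc) hx1
      simpa using this
    have hns : n * s ∈ N ⊔ (commutator G ⊓ qPow (q ^ 2) ⊤) :=
      mul_mem (Subgroup.mem_sup_left hn) (Subgroup.mem_sup_right ⟨hsc, hs⟩)
    exact (sup_le (sup_le (le_sup_left.trans le_sup_left) le_sup_right)
      (le_sup_right.trans le_sup_left) :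
      N ⊔ (commutator G ⊓ qPow (q ^ 2) ⊤) ≤ _) hns
  · refine sup_le (sup_le ?_ ?_) ?_
    · exact le_inf hlcs2_comm hlcs2_qcs2
    · exact le_inf inf_le_left (inf_le_right.trans hQ_qcs2)
    · exact le_inf hqpow_comm hqpow_qcs2
end

section
/- Let G be a profinite group and N the kernel of the canonical projection G → G(p) onto its maximal pro-p quotient. Then H¹(N, ℤ/q)^G = 0, i.e., every G-invariant continuous homomorphism N → ℤ/q is trivial; consequently the inflation map H²(G(p), ℤ/q) → H²(G, ℤ/q) is injective. -/
/-- A degree-`m` continuous inhomogeneous cochain on `G` with values in the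
(discrete) trivial module `ℤ/q`. -/
def IsCochain (q : ℕ) (G : Type*) [TopologicalSpace G] (m : ℕ)
    (f : (Fin m → G) → ZMod q) : Prop :=
  @Continuous (Fin m → G) (ZMod q) _ ⊥ f

/-- The `i`-th "multiply adjacent entries" face map used in the inhomogeneous
differential: `(g₁, …, g_{m+1}) ↦ (g₁, …, g_i g_{i+1}, …, g_{m+1})`
(0-indexed at position `i`). -/
def mulFace {G : Type*} [Group G] {m : ℕ} (i : ℕ) (g : Fin (m + 1) → G) : Fin m → G :=
  fun j => if (j : ℕ) < i then g j.castSucc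
    else if (j : ℕ) = i then g j.castSucc * g j.succ
    else g j.succ

/-- The inhomogeneous differential `δ : Cᵐ(G, ℤ/q) → Cᵐ⁺¹(G, ℤ/q)` for the
trivial action:
`(δf)(g₁,…,g_{m+1}) = f(g₂,…,g_{m+1}) + ∑_{i=1}^{m} (-1)^i f(g₁,…,g_i g_{i+1},…,g_{m+1}) + (-1)^{m+1} f(g₁,…,g_m)`. -/
def cochainD (q : ℕ) {G : Type*} [Group G] (m : ℕ) (f : (Fin m → G) → ZMod q) :
    (Fin (m + 1) → G) → ZMod q :=
  fun g => f (fun j => g j.succ)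
    + (Finset.range m).sum (fun i => (-1 : ZMod q) ^ (i + 1) * f (mulFace i g))
    + (-1 : ZMod q) ^ (m + 1) * f (fun j => g j.castSucc)

/-- `H^{m+1}(G, ℤ/q) = 0`: every continuous `(m+1)`-cocycle is the coboundary
of a continuous `m`-cochain. -/
def HTrivialSucc (q : ℕ) (G : Type*) [Group G] [TopologicalSpace G] (m : ℕ) : Prop :=
  ∀ f : (Fin (m + 1) → G) → ZMod q, IsCochain q G (m + 1) f →
    (∀ g : Fin (m + 2) → G, cochainD q (m + 1) f g = 0) →
    ∃ h : (Fin m → G) → ZMod q, IsCochain q G m h ∧ f = cochainD q m h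

/-- A profinite group is pro-`p` if every open normal subgroup has `p`-power index. -/
def IsProP (p : ℕ) (G : Type*) [Group G] [TopologicalSpace G] : Prop :=
  ∀ U : Subgroup G, U.Normal → IsOpen (U : Set G) → ∃ n : ℕ, U.index = p ^ n

lemma fin1_eq (j : Fin 1) : j = 0 := Subsingleton.elim _ _

lemma cochainD_one (q : ℕ) {G : Type*} [Group G] (b : (Fin 1 → G) → ZMod q) (g : Fin 2 → G) :
    cochainD q 1 b g = b (fun _ => g 1) - b (fun _ => g 0 * g 1) + b (fun _ => g 0) := by
  have h1 : (fun j : Fin 1 => g j.succ) = fun _ => g 1 := by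
    funext j; rw [fin1_eq j]; rfl
  have h2 : (fun j : Fin 1 => g j.castSucc) = fun _ => g 0 := by
    funext j; rw [fin1_eq j]; rfl
  have h3 : mulFace 0 g = fun _ => g 0 * g 1 := by
    funext j; rw [fin1_eq j]; rfl
  simp only [cochainD, Finset.sum_range_one, h1, h2, h3, pow_one, pow_two]
  ring

lemma cochainD_two (q : ℕ) {G : Type*} [Group G] (f : (Fin 2 → G) → ZMod q) (g : Fin 3 → G) :
    cochainD q 2 f g =
      f ![g 1, g 2] - f ![g 0 * g 1, g 2] + f ![g 0, g 1 * g 2] - f ![g 0, g 1] := by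
  have h1 : (fun j : Fin 2 => g j.succ) = ![g 1, g 2] := by
    funext j; fin_cases j <;> rfl
  have h2 : (fun j : Fin 2 => g j.castSucc) = ![g 0, g 1] := by
    funext j; fin_cases j <;> rfl
  have h3 : mulFace 0 g = ![g 0 * g 1, g 2] := by
    funext j; fin_cases j <;> rfl
  have h4 : mulFace 1 g = ![g 0, g 1 * g 2] := by
    funext j; fin_cases j <;> rfl
  simp only [cochainD, Finset.sum_range_succ, Finset.sum_range_one, h1, h2, h3, h4]
  ring


open Pointwise in
theorem aux1
    {G : Type*} [Group G] [TopologicalSpace G] [IsTopologicalGroup G]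
    [CompactSpace G] [T2Space G] [TotallyDisconnectedSpace G]
    {Q : Type*} [Group Q] [TopologicalSpace Q] [IsTopologicalGroup Q]
    [CompactSpace Q] [T2Space Q] [TotallyDisconnectedSpace Q]
    (p d q : ℕ) (hp : p.Prime) (hd : 1 ≤ d) (hq : q = p ^ d)
    (hQ : IsProP p Q) (π : G →* Q) (hπcont : Continuous π) (hπsurj : Function.Surjective π)
    (huniv : ∀ (H : Type) (_ : Group H) (_ : TopologicalSpace H) (_ : IsTopologicalGroup H)
      (_ : CompactSpace H) (_ : T2Space H) (_ : TotallyDisconnectedSpace H),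
      IsProP p H → ∀ f : G →* H, Continuous f →
        ∃ fbar : Q →* H, Continuous fbar ∧ fbar.comp π = f) :
    ∀ φ : ↥π.ker →* Multiplicative (ZMod q),
      (@Continuous ↥π.ker (Multiplicative (ZMod q)) _ ⊥ φ) →
      (∀ (g : G) (r : ↥π.ker) (h : g * ↑r * g⁻¹ ∈ π.ker), φ ⟨g * ↑r * g⁻¹, h⟩ = φ r) →
      ∀ r : ↥π.ker, φ r = 1 := by
  intro φ hφcont hφinv r
  letI : TopologicalSpace (Multiplicative (ZMod q)) := ⊥
  haveI : DiscreteTopology (Multiplicative (ZMod q)) := ⟨rfl⟩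
  have hN : True := trivial
  -- the kernel of φ is open in (π.ker)
  have hkeropen : IsOpen {x : ↥(π.ker) | φ x = 1} := by
    have : {x : ↥(π.ker) | φ x = 1} = φ ⁻¹' {1} := rfl
    rw [this]
    exact hφcont.isOpen_preimage _ (isOpen_discrete _)
  obtain ⟨V, hVopen, hVeq⟩ := isOpen_induced_iff.mp hkeropen
  have h1V : (1 : G) ∈ V := by
    have : ((1 : ↥(π.ker)) : G) ∈ V := by
      have : (1 : ↥(π.ker)) ∈ Subtype.val ⁻¹' V := by rw [hVeq]; exact map_one φ
      exact this
    simpa using this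
  obtain ⟨C, hCclopen, h1C, hCV⟩ := compact_exists_isClopen_in_isOpen hVopen h1V
  obtain ⟨W, hWC⟩ := IsTopologicalGroup.exist_openNormalSubgroup_sub_clopen_nhds_of_one hCclopen h1C
  have hWker : ∀ x : G, x ∈ W.toSubgroup → ∀ hx : x ∈ (π.ker), φ ⟨x, hx⟩ = 1 := by
    intro x hxW hx
    have : (⟨x, hx⟩ : ↥(π.ker)) ∈ Subtype.val ⁻¹' V := hCV (hWC hxW)
    rw [hVeq] at this
    exact this
  -- K' : image of ker φ in G
  let K' : Subgroup G :=
    { carrier := {g : G | ∃ h : g ∈ (π.ker), φ ⟨g, h⟩ = 1}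
      one_mem' := ⟨(π.ker).one_mem, map_one φ⟩
      mul_mem' := by
        rintro x y ⟨hx, hx1⟩ ⟨hy, hy1⟩
        refine ⟨(π.ker).mul_mem hx hy, ?_⟩
        have : (⟨x * y, (π.ker).mul_mem hx hy⟩ : ↥(π.ker)) = ⟨x, hx⟩ * ⟨y, hy⟩ := rfl
        rw [this, map_mul, hx1, hy1, mul_one]
      inv_mem' := by
        rintro x ⟨hx, hx1⟩
        refine ⟨(π.ker).inv_mem hx, ?_⟩
        have : (⟨x⁻¹, (π.ker).inv_mem hx⟩ : ↥(π.ker)) = (⟨x, hx⟩ : ↥(π.ker))⁻¹ := rfl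
        rw [this, map_inv, hx1, inv_one] }
  haveI hK'norm : K'.Normal := by
    constructor
    rintro n ⟨hn, hn1⟩ g
    have hmem : g * ((⟨n, hn⟩ : ↥π.ker) : G) * g⁻¹ ∈ π.ker :=
      Subgroup.Normal.conj_mem (MonoidHom.normal_ker π) n hn g
    exact ⟨hmem, (hφinv g ⟨n, hn⟩ hmem).trans hn1⟩
  set M : Subgroup G := K' ⊔ W.toSubgroup with hM
  haveI : M.Normal := Subgroup.sup_normal _ _
  have hMopen : IsOpen (M : Set G) := Subgroup.isOpen_mono le_sup_right W.isOpen
  -- index of M is a power of p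
  have hrel : ∃ k : ℕ, M.relIndex (π.ker) = p ^ k := by
    have h1 : M.relIndex (π.ker) ∣ q := by
      have hle : φ.ker ≤ M.subgroupOf (π.ker) := by
        intro x hx
        exact le_sup_left (α := Subgroup G) (⟨x.2, by simpa using hx⟩ : (x : G) ∈ K')
      calc M.relIndex (π.ker) = (M.subgroupOf (π.ker)).index := rfl
        _ ∣ φ.ker.index := Subgroup.index_dvd_of_le hle
        _ = Nat.card φ.range := Subgroup.index_ker φ
        _ ∣ Nat.card (Multiplicative (ZMod q)) := Subgroup.card_subgroup_dvd_card _
        _ = q := Nat.card_zmod q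
    rw [hq] at h1
    obtain ⟨k, _, hk⟩ := (Nat.dvd_prime_pow hp).mp h1
    exact ⟨k, hk⟩
  have hsup : ∃ k : ℕ, ((π.ker) ⊔ M).index = p ^ k := by
    have hcomap : Subgroup.comap π (Subgroup.map π ((π.ker) ⊔ M)) = (π.ker) ⊔ M := by
      rw [Subgroup.comap_map_eq, sup_eq_left]
      exact le_sup_left
    have hTnormal : (Subgroup.map π ((π.ker) ⊔ M)).Normal := by
      haveI : ((π.ker) ⊔ M).Normal := Subgroup.sup_normal _ _
      exact Subgroup.Normal.map inferInstance π hπsurj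
    have hTopen : IsOpen ((Subgroup.map π ((π.ker) ⊔ M)) : Set Q) := by
      have hqm : Topology.IsQuotientMap π := (hπcont.isClosedMap).isQuotientMap hπcont hπsurj
      rw [← hqm.isOpen_preimage]
      have : π ⁻¹' (Subgroup.map π ((π.ker) ⊔ M) : Set Q)
          = ((Subgroup.comap π (Subgroup.map π ((π.ker) ⊔ M))) : Set G) := rfl
      rw [this, hcomap]
      exact Subgroup.isOpen_mono (le_sup_right.trans le_sup_right : W.toSubgroup ≤ (π.ker) ⊔ M) W.isOpen
    obtain ⟨k, hk⟩ := hQ _ hTnormal hTopen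
    refine ⟨k, ?_⟩
    rw [← hk, ← Subgroup.index_comap_of_surjective _ hπsurj, hcomap]
  obtain ⟨k1, hk1⟩ := hrel
  obtain ⟨k2, hk2⟩ := hsup
  have hMindex : M.index = p ^ (k1 + k2) := by
    have := Subgroup.relIndex_mul_index (le_sup_right : M ≤ (π.ker) ⊔ M)
    rw [Subgroup.relIndex_sup_right, hk1, hk2] at this
    rw [pow_add]
    exact this.symm
  -- build the finite p-group H = Shrink (G/M)
  haveI hfin : Finite (G ⧸ M) := Subgroup.quotient_finite_of_isOpen M hMopen
  haveI : Small.{0} (G ⧸ M) := Countable.toSmall _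
  let H : Type := Shrink.{0} (G ⧸ M)
  let e : H ≃* (G ⧸ M) := Shrink.mulEquiv
  letI : TopologicalSpace H := ⊥
  haveI : DiscreteTopology H := ⟨rfl⟩
  haveI hHfin : Finite H := Finite.of_equiv (G ⧸ M) (equivShrink (G ⧸ M))
  haveI : ContinuousMul H := continuousMul_of_discreteTopology
  haveI : ContinuousInv H := continuousInv_of_discreteTopology
  haveI : IsTopologicalGroup H := ⟨⟩
  have hcardH : Nat.card H = p ^ (k1 + k2) := by
    rw [Nat.card_congr e.toEquiv, ← hMindex]
    rfl
  have hHproP : IsProP p H := by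
    intro U _ _
    have : U.index ∣ p ^ (k1 + k2) := hcardH ▸ Subgroup.index_dvd_card U
    obtain ⟨k, _, hk⟩ := (Nat.dvd_prime_pow hp).mp this
    exact ⟨k, hk⟩
  let f : G →* H := e.symm.toMonoidHom.comp (QuotientGroup.mk' M)
  have hfcont : Continuous f := by
    rw [continuous_discrete_rng]
    intro b
    by_cases hb : ∃ g₀ : G, f g₀ = b
    · obtain ⟨g₀, hg₀⟩ := hb
      have : f ⁻¹' {b} = (fun g => g₀⁻¹ * g) ⁻¹' (M : Set G) := by
        ext x
        simp only [Set.mem_preimage, Set.mem_singleton_iff, SetLike.mem_coe, ← hg₀]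
        constructor
        · intro hx
          have : (QuotientGroup.mk' M) x = (QuotientGroup.mk' M) g₀ := e.symm.injective hx
          have := (QuotientGroup.eq (s := M)).mp this.symm
          exact this
        · intro hx
          have : (QuotientGroup.mk' M) x = (QuotientGroup.mk' M) g₀ :=
            ((QuotientGroup.eq (s := M)).mpr hx).symm
          simpa [f] using congrArg e.symm this
      rw [this]
      exact hMopen.preimage (continuous_const.mul continuous_id)
    · have : f ⁻¹' {b} = ∅ := by
        ext x; simp only [Set.mem_preimage, Set.mem_singleton_iff, Set.mem_empty_iff_false,
          iff_false]
        exact fun hx => hb ⟨x, hx⟩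
      rw [this]; exact isOpen_empty
  obtain ⟨fbar, _, hfbar⟩ := huniv H inferInstance inferInstance inferInstance inferInstance inferInstance inferInstance hHproP f hfcont
  -- conclude : r ∈ M
  have hfr : f (r : G) = 1 := by
    have h1 : π (r : G) = 1 := r.2
    calc f (r : G) = fbar (π (r : G)) := by rw [← hfbar]; rfl
      _ = fbar 1 := by rw [h1]
      _ = 1 := map_one fbar
  have hrM : (r : G) ∈ M := by
    have : (QuotientGroup.mk' M) (r : G) = 1 := by
      have := congrArg e hfr
      simpa [f] using this
    exact (QuotientGroup.eq_one_iff _).mp this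
  -- decompose r = k * w with k ∈ K', w ∈ W
  have hset : ((K' ⊔ W.toSubgroup : Subgroup G) : Set G) = (K' : Set G) * (W : Set G) :=
    Subgroup.mul_normal K' W.toSubgroup
  have hrmul : (r : G) ∈ (K' : Set G) * (W : Set G) := by rw [← hset]; exact hrM
  obtain ⟨x, hx, w, hw, hxw⟩ := hrmul
  obtain ⟨hxN, hx1⟩ := hx
  have hwN : w ∈ (π.ker) := by
    have : w = x⁻¹ * (r : G) := by rw [← hxw]; group
    rw [this]
    exact (π.ker).mul_mem ((π.ker).inv_mem hxN) r.2
  have hw1 : φ ⟨w, hwN⟩ = 1 := hWker w hw hwN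
  have hreq : r = (⟨x, hxN⟩ : ↥(π.ker)) * ⟨w, hwN⟩ := by
    apply Subtype.ext
    exact hxw.symm
  rw [hreq, map_mul, hx1, hw1, mul_one]


/-- Let `G` be a profinite group, `p` prime, `q = p^d`, and `π : G → Q` the
canonical projection onto the maximal pro-p quotient `Q = G(p)` (a continuous
surjection to a pro-p group through which every continuous homomorphism from
`G` to a pro-p group factors).  Let `N = ker π`.  Then:
(1) `H¹(N, ℤ/q)^G = 0`: every `G`-invariant continuous homomorphism
`N → ℤ/q` is trivial; and consequently
(2) the inflation map `H²(G(p), ℤ/q) → H²(G, ℤ/q)` is injective: a continuous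
2-cocycle on `G(p)` whose pullback along `π` is a coboundary of a continuous
cochain is itself the coboundary of a continuous cochain. -/
theorem H1_ker_trivial_and_inflation_injective
    {G : Type*} [Group G] [TopologicalSpace G] [IsTopologicalGroup G]
    [CompactSpace G] [T2Space G] [TotallyDisconnectedSpace G]
    {Q : Type*} [Group Q] [TopologicalSpace Q] [IsTopologicalGroup Q]
    [CompactSpace Q] [T2Space Q] [TotallyDisconnectedSpace Q]
    (p d q : ℕ) (hp : p.Prime) (hd : 1 ≤ d) (hq : q = p ^ d)
    (hQ : IsProP p Q) (π : G →* Q) (hπcont : Continuous π) (hπsurj : Function.Surjective π)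
    (huniv : ∀ (H : Type) (_ : Group H) (_ : TopologicalSpace H) (_ : IsTopologicalGroup H)
      (_ : CompactSpace H) (_ : T2Space H) (_ : TotallyDisconnectedSpace H),
      IsProP p H → ∀ f : G →* H, Continuous f →
        ∃ fbar : Q →* H, Continuous fbar ∧ fbar.comp π = f) :
    -- (1) every G-invariant continuous homomorphism N → ℤ/q is trivial
    ((∀ φ : ↥π.ker →* Multiplicative (ZMod q),
      (@Continuous ↥π.ker (Multiplicative (ZMod q)) _ ⊥ φ) →
      (∀ (g : G) (r : ↥π.ker) (h : g * ↑r * g⁻¹ ∈ π.ker), φ ⟨g * ↑r * g⁻¹, h⟩ = φ r) →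
      ∀ r : ↥π.ker, φ r = 1) ∧
    -- (2) inflation H²(G(p), ℤ/q) → H²(G, ℤ/q) is injective
    (∀ f : (Fin 2 → Q) → ZMod q, IsCochain q Q 2 f →
      (∀ g : Fin 3 → Q, cochainD q 2 f g = 0) →
      (∃ b : (Fin 1 → G) → ZMod q, IsCochain q G 1 b ∧
        (fun v : Fin 2 → G => f (fun i => π (v i))) = cochainD q 1 b) →
      ∃ b' : (Fin 1 → Q) → ZMod q, IsCochain q Q 1 b' ∧ f = cochainD q 1 b')) := by
  refine ⟨aux1 p d q hp hd hq hQ π hπcont hπsurj huniv, ?_⟩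
  rintro f hfc hfcocycle ⟨b, hbc, hb⟩
  letI : TopologicalSpace (ZMod q) := ⊥
  haveI : DiscreteTopology (ZMod q) := ⟨rfl⟩
  letI : TopologicalSpace (Multiplicative (ZMod q)) := ⊥
  haveI : DiscreteTopology (Multiplicative (ZMod q)) := ⟨rfl⟩
  set B : G → ZMod q := fun g => b (fun _ => g) with hBdef
  set c : ZMod q := f ![1, 1] with hcdef
  -- the basic coboundary relation
  have hrel : ∀ x y : G, B (x * y) = B x + B y - f ![π x, π y] := by
    intro x y
    have h := congrFun hb ![x, y]
    rw [cochainD_one] at h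
    have hv : (fun i => π (![x, y] i)) = ![π x, π y] := by
      funext i; fin_cases i <;> rfl
    rw [hv] at h
    simp only [Matrix.cons_val_zero, Matrix.cons_val_one, Matrix.head_cons] at h
    linear_combination h
  -- degenerate cocycle values
  have hf1 : ∀ x : Q, f ![1, x] = c := by
    intro x
    have h := hfcocycle ![1, 1, x]
    rw [cochainD_two] at h
    simp only [Matrix.cons_val_zero, Matrix.cons_val_one, Matrix.head_cons,
      Matrix.cons_val_two, Matrix.tail_cons, one_mul] at h
    linear_combination h
  have hfx1 : ∀ x : Q, f ![x, 1] = c := by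
    intro x
    have h := hfcocycle ![x, 1, 1]
    rw [cochainD_two] at h
    simp only [Matrix.cons_val_zero, Matrix.cons_val_one, Matrix.head_cons,
      Matrix.cons_val_two, Matrix.tail_cons, one_mul, mul_one] at h
    linear_combination -h
  have hB1 : B 1 = c := by
    have h := hrel 1 1
    rw [one_mul, map_one, hf1 1] at h
    linear_combination -h
  -- the G-invariant homomorphism on N
  have hrelN : ∀ (x y : G), π x = 1 → B (x * y) = B x + B y - c := by
    intro x y hx
    rw [hrel x y, hx, hf1]
  have hφinvar : ∀ (g x : G), π x = 1 → B (g * x * g⁻¹) = B x := by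
    intro g x hx
    have h1 : B (g * (x * g⁻¹)) = B g + B (x * g⁻¹) - f ![π g, π (x * g⁻¹)] :=
      hrel g (x * g⁻¹)
    have hπx : π (x * g⁻¹) = (π g)⁻¹ := by simp [hx]
    rw [hπx] at h1
    have h2 : B (x * g⁻¹) = B x + B g⁻¹ - f ![π x, π g⁻¹] := hrel x g⁻¹
    rw [hx, map_inv, hf1] at h2
    have h3 : B (g * g⁻¹) = B g + B g⁻¹ - f ![π g, π g⁻¹] := hrel g g⁻¹
    rw [mul_inv_cancel, map_inv, hB1] at h3
    have hassoc : g * (x * g⁻¹) = g * x * g⁻¹ := (mul_assoc g x g⁻¹).symm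
    rw [hassoc] at h1
    rw [h1, h2]
    linear_combination -h3
  let φ : ↥π.ker →* Multiplicative (ZMod q) :=
    { toFun := fun r => Multiplicative.ofAdd (B ↑r - c)
      map_one' := by
        simp only [OneMemClass.coe_one, hB1, sub_self, ofAdd_zero]
      map_mul' := by
        intro r s
        have : B (↑r * ↑s) = B ↑r + B ↑s - c := hrelN ↑r ↑s r.2
        show Multiplicative.ofAdd (B (↑r * ↑s) - c) = _
        rw [this, ← ofAdd_add]
        congr 1
        ring }
  have hφcont : @Continuous ↥π.ker (Multiplicative (ZMod q)) _ ⊥ φ := by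
    have hBcont : Continuous B := hbc.comp (continuous_pi fun _ => continuous_id)
    have h2 : Continuous (fun x : ZMod q => (Multiplicative.ofAdd (x - c) : Multiplicative (ZMod q))) :=
      continuous_of_discreteTopology
    exact h2.comp (hBcont.comp continuous_subtype_val)
  have hφzero : ∀ x : G, π x = 1 → B x = c := by
    intro x hx
    have := aux1 p d q hp hd hq hQ π hπcont hπsurj huniv φ hφcont
      (fun g r h => by
        have : B (g * ↑r * g⁻¹) = B ↑r := hφinvar g ↑r r.2
        show Multiplicative.ofAdd _ = Multiplicative.ofAdd _
        rw [this]) ⟨x, hx⟩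
    have : B x - c = 0 := by
      have h' := this
      exact ofAdd_eq_one.mp h'
    linear_combination this
  -- descend b to Q
  let s : Q → G := Function.surjInv hπsurj
  have hs : ∀ y : Q, π (s y) = y := fun y => Function.surjInv_eq hπsurj y
  let B' : Q → ZMod q := fun y => B (s y)
  have hB'π : ∀ x : G, B' (π x) = B x := by
    intro x
    have hn : π ((s (π x))⁻¹ * x) = 1 := by simp [hs]
    have hx : x = s (π x) * ((s (π x))⁻¹ * x) := by group
    have h1 : B (s (π x) * ((s (π x))⁻¹ * x)) =
        B (s (π x)) + B ((s (π x))⁻¹ * x) - f ![π (s (π x)), π ((s (π x))⁻¹ * x)] :=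
      hrel _ _
    rw [hn, hs, hfx1, hφzero _ hn] at h1
    rw [← hx] at h1
    show B (s (π x)) = B x
    linear_combination -h1
  have hB'cont : Continuous B' := by
    have hqm : Topology.IsQuotientMap π := (hπcont.isClosedMap).isQuotientMap hπcont hπsurj
    rw [hqm.continuous_iff]
    have : B' ∘ π = B := funext hB'π
    rw [this]
    exact hbc.comp (continuous_pi fun _ => continuous_id)
  refine ⟨fun v => B' (v 0), hB'cont.comp (continuous_apply 0), ?_⟩
  funext w
  rw [cochainD_one]
  have hw : w = ![w 0, w 1] := by funext i; fin_cases i <;> rfl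
  have h1 : B (s (w 0) * s (w 1)) =
      B (s (w 0)) + B (s (w 1)) - f ![π (s (w 0)), π (s (w 1))] := hrel _ _
  rw [hs, hs] at h1
  have h2 : B (s (w 0) * s (w 1)) = B' (w 0 * w 1) := by
    rw [← hB'π (s (w 0) * s (w 1))]
    congr 1
    rw [map_mul, hs, hs]
  have h3 : B (s (w 0)) = B' (w 0) := (hB'π (s (w 0))).symm.trans (by rw [hs])
  have h4 : B (s (w 1)) = B' (w 1) := (hB'π (s (w 1))).symm.trans (by rw [hs])
  rw [h2, h3, h4] at h1
  have hfw : f w = f ![w 0, w 1] := by rw [← hw]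
  have hv1 : (fun _ : Fin 1 => w 1) 0 = w 1 := rfl
  show f w = B' ((fun _ : Fin 1 => w 1) 0) - B' ((fun _ : Fin 1 => (w 0 * w 1)) 0)
      + B' ((fun _ : Fin 1 => w 0) 0)
  rw [hfw]
  show f ![w 0, w 1] = B' (w 1) - B' (w 0 * w 1) + B' (w 0)
  linear_combination h1
end
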